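/- In the signaling game where nature chooses t ∈ {−1,1} uniformly, Ann observes t and chooses a ∈ [−1,1], Bob observes a and chooses b ∈ {−1,1}, with payoffs u_A(t,a,b) = −|t − b + a| and u_B(t,a,b) = a·b, there is no Nash equilibrium in which Bob best-responds after every action a (sequential rationality off path): for a ≠ 0 Bob's unique best response is b = sign(a); given this, each type t of Ann can obtain payoff strictly greater than −ε for every ε > 0 but only by actions arbitrarily close to 0, and the supremum payoff 0 is unattainable for both types simultaneously when Bob's response to a = 0 is independent of t; hence no sequentially rational equilibrium exists. -/

import Mathlib

open MeasureTheory

/-- Expected payoff of Ann's type `t` from action `a` when Bob plays `b = 1` with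
probability `β a`; Ann's payoff is `-|t - b + a|`. -/
noncomputable def WA (t a : ℝ) (β : ℝ → ℝ) : ℝ :=
  β a * (-(|t - 1 + a|)) + (1 - β a) * (-(|t + 1 + a|))

/-- Sequential rationality of Bob's (mixed) response `β`: after every action,
including off-path ones, Bob best-responds, i.e. `b = 1` if `a > 0` and
`b = -1` if `a < 0`. -/
def SeqRat (β : ℝ → ℝ) : Prop :=
  (∀ a, β a ∈ Set.Icc (0:ℝ) 1) ∧ (∀ a, 0 < a → β a = 1) ∧ (∀ a, a < 0 → β a = 0)

lemma WA_nonpos (t a : ℝ) (β : ℝ → ℝ) (hβ : β a ∈ Set.Icc (0:ℝ) 1) :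
    WA t a β ≤ 0 := by
  obtain ⟨h0, h1⟩ := hβ
  have g1 := abs_nonneg (t - 1 + a)
  have g2 := abs_nonneg (t + 1 + a)
  unfold WA
  nlinarith

lemma WA_pos_one (a : ℝ) (β : ℝ → ℝ) (hβ : SeqRat β) (ha : 0 < a) :
    WA 1 a β = -a := by
  have h := hβ.2.1 a ha
  unfold WA
  rw [h]
  have : |1 - 1 + a| = a := by rw [abs_of_pos]; ring; linarith
  rw [this]; ring

lemma WA_neg_negone (a : ℝ) (β : ℝ → ℝ) (hβ : SeqRat β) (ha : a < 0) :
    WA (-1) a β = a := by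
  have h := hβ.2.2 a ha
  unfold WA
  rw [h]
  have : |(-1:ℝ) + 1 + a| = -a := by rw [abs_of_neg]; ring; linarith
  rw [this]; ring

-- maximizer for type 1 forces β 0 = 1
lemma max_one_WA (β : ℝ → ℝ) (hβ : SeqRat β) (a : ℝ) (haI : a ∈ Set.Icc (-1:ℝ) 1)
    (hmax : ∀ a' ∈ Set.Icc (-1:ℝ) 1, WA 1 a' β ≤ WA 1 a β) : a = 0 ∧ β 0 = 1 := by
  have hle : WA 1 a β ≤ 0 := WA_nonpos _ _ _ (hβ.1 a)
  have hge : WA 1 a β ≥ 0 := by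
    by_contra h
    push_neg at h
    set W := WA 1 a β with hW
    set a' := min (-W) 1 / 2 with ha'
    have hm : 0 < min (-W) 1 := lt_min (by linarith) one_pos
    have ha'pos : 0 < a' := by simp only [ha']; linarith
    have ha'le : a' ≤ 1 := by
      have : min (-W) 1 ≤ 1 := min_le_right _ _
      linarith
    have h1 := hmax a' ⟨by linarith, ha'le⟩
    rw [WA_pos_one a' β hβ ha'pos] at h1
    have : a' < -W := by
      have : min (-W) 1 ≤ -W := min_le_left _ _
      linarith
    linarith
  have hz : WA 1 a β = 0 := le_antisymm hle hge
  obtain ⟨h0, h1⟩ := hβ.1 a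
  have g1 : |(1:ℝ) - 1 + a| = |a| := by ring_nf
  have g2 : |(1:ℝ) + 1 + a| ≥ 1 := by
    rw [abs_of_nonneg (by linarith [haI.1])]
    linarith [haI.1]
  unfold WA at hz
  rw [g1] at hz
  have ga := abs_nonneg a
  have hb1 : β a = 1 := by nlinarith
  have ha0 : a = 0 := by
    rw [hb1] at hz
    have : |a| = 0 := by nlinarith
    exact abs_eq_zero.mp this
  exact ⟨ha0, by rw [ha0] at hb1; exact hb1⟩

lemma max_negone (β : ℝ → ℝ) (hβ : SeqRat β) (a : ℝ) (haI : a ∈ Set.Icc (-1:ℝ) 1)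
    (hmax : ∀ a' ∈ Set.Icc (-1:ℝ) 1, WA (-1) a' β ≤ WA (-1) a β) : a = 0 ∧ β 0 = 0 := by
  have hle : WA (-1) a β ≤ 0 := WA_nonpos _ _ _ (hβ.1 a)
  have hge : WA (-1) a β ≥ 0 := by
    by_contra h
    push_neg at h
    set W := WA (-1) a β with hW
    set a' := -(min (-W) 1 / 2) with ha'
    have hm : 0 < min (-W) 1 := lt_min (by linarith) one_pos
    have ha'neg : a' < 0 := by simp only [ha']; linarith
    have ha'ge : -1 ≤ a' := by
      have : min (-W) 1 ≤ 1 := min_le_right _ _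
      simp only [ha']; linarith
    have h1 := hmax a' ⟨ha'ge, by linarith⟩
    rw [WA_neg_negone a' β hβ ha'neg] at h1
    have : min (-W) 1 ≤ -W := min_le_left _ _
    have hW2 : min (-W) 1 > 0 := lt_min (by linarith) one_pos
    simp only [ha'] at h1
    linarith
  have hz : WA (-1) a β = 0 := le_antisymm hle hge
  obtain ⟨h0, h1⟩ := hβ.1 a
  have g1 : |(-1:ℝ) + 1 + a| = |a| := by ring_nf
  have g2 : |(-1:ℝ) - 1 + a| ≥ 1 := by
    rw [abs_of_nonpos (by linarith [haI.2])]
    linarith [haI.2]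
  unfold WA at hz
  rw [g1] at hz
  have ga := abs_nonneg a
  have hb1 : β a = 0 := by nlinarith
  have ha0 : a = 0 := by
    rw [hb1] at hz
    have : |a| = 0 := by nlinarith
    exact abs_eq_zero.mp this
  exact ⟨ha0, by rw [ha0] at hb1; exact hb1⟩

theorem stmt16 :
    -- each type of Ann can secure more than -ε against a sequentially rational Bob
    (∀ β : ℝ → ℝ, SeqRat β → ∀ t ∈ ({-1, 1} : Set ℝ), ∀ ε > (0:ℝ),
      ∃ a ∈ Set.Icc (-1:ℝ) 1, -ε < WA t a β) ∧
    -- but no sequentially rational equilibrium exists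
    ¬ ∃ (σ : ℝ → Measure ℝ) (β : ℝ → ℝ), SeqRat β ∧
        ∀ t ∈ ({-1, 1} : Set ℝ),
          IsProbabilityMeasure (σ t) ∧ σ t (Set.Icc (-1:ℝ) 1)ᶜ = 0 ∧
          ∀ᵐ a ∂(σ t), a ∈ Set.Icc (-1:ℝ) 1 ∧
            ∀ a' ∈ Set.Icc (-1:ℝ) 1, WA t a' β ≤ WA t a β := by
  constructor
  · intro β hβ t ht ε hε
    have hm : 0 < min ε 1 := lt_min hε one_pos
    have hm1 : min ε 1 ≤ 1 := min_le_right _ _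
    have hme : min ε 1 ≤ ε := min_le_left _ _
    rcases ht with rfl | ht
    · refine ⟨-(min ε 1 / 2), ⟨by linarith, by linarith⟩, ?_⟩
      rw [WA_neg_negone _ β hβ (by linarith)]
      linarith
    · rcases ht with rfl
      refine ⟨min ε 1 / 2, ⟨by linarith, by linarith⟩, ?_⟩
      rw [WA_pos_one _ β hβ (by linarith)]
      linarith
  · rintro ⟨σ, β, hβ, h⟩
    have h1 := h 1 (by right; rfl)
    have h2 := h (-1) (by left; rfl)
    obtain ⟨hp1, -, hae1⟩ := h1
    obtain ⟨hp2, -, hae2⟩ := h2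
    haveI := hp1; haveI := hp2
    obtain ⟨a1, ha1I, hmax1⟩ := hae1.exists
    obtain ⟨a2, ha2I, hmax2⟩ := hae2.exists
    have e1 := max_one_WA β hβ a1 ha1I hmax1
    have e2 := max_negone β hβ a2 ha2I hmax2
    rw [e1.2] at e2
    exact one_ne_zero e2.2
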